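/- Let Ω be a finite set with fixed-point-free involutions s₁, s₂, and let G act on Ω commuting with s₁ and s₂. Suppose an orbit O of ⟨s₁,s₂⟩ meets exactly two G-orbit classes A and B, with s₁ fixing both A∩O and B∩O setwise, and s₂ exchanging A∩O and B∩O. Then every element Φ ∈ A∩O satisfies Φ·s₁ ∈ A and Φ·s₂ ∈ B, and |O| is divisible by 4. -/
import Mathlib

open Finset in
lemma even_card_of_fpf_invol {α : Type*} [DecidableEq α] (s : Finset α) (f : α → α)
    (hmem : ∀ x ∈ s, f x ∈ s) (hinv : ∀ x ∈ s, f (f x) = x) (hne : ∀ x ∈ s, f x ≠ x) :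
    Even s.card := by
  induction s using Finset.strongInduction with
  | _ s ih =>
    rcases s.eq_empty_or_nonempty with rfl | ⟨a, ha⟩
    · simp
    · have hfa : f a ∈ s := hmem a ha
      have hfane : f a ≠ a := hne a ha
      set t := (s.erase a).erase (f a) with ht
      have hts : t ⊆ s := (erase_subset _ _).trans (erase_subset _ _)
      have htss : t ⊂ s :=
        ⟨hts, fun hsub => absurd (mem_erase.mp (mem_erase.mp (hsub ha)).2).1 (by simp)⟩
      have hmem_t : ∀ x ∈ t, x ∈ s ∧ x ≠ a ∧ x ≠ f a := by
        intro x hx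
        simp only [ht, mem_erase] at hx
        exact ⟨hx.2.2, hx.2.1, hx.1⟩
      have h1 : ∀ x ∈ t, f x ∈ t := by
        intro x hx
        obtain ⟨hxs, hxa, hxfa⟩ := hmem_t x hx
        simp only [ht, mem_erase]
        refine ⟨?_, ?_, hmem x hxs⟩
        · intro h; apply hxa; rw [← hinv x hxs, h, hinv a ha]
        · intro h; apply hxfa; rw [← hinv x hxs, h]
      have h2 : ∀ x ∈ t, f (f x) = x := fun x hx => hinv x (hmem_t x hx).1
      have h3 : ∀ x ∈ t, f x ≠ x := fun x hx => hne x (hmem_t x hx).1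
      have heven := ih t htss h1 h2 h3
      have hcard : t.card + 2 = s.card := by
        have h1' : (s.erase a).card = s.card - 1 := card_erase_of_mem ha
        have hfa' : f a ∈ s.erase a := mem_erase.mpr ⟨hfane, hfa⟩
        have h2' : t.card = (s.erase a).card - 1 := card_erase_of_mem hfa'
        have hpos : 2 ≤ s.card := by
          have := Finset.one_lt_card.mpr ⟨a, ha, f a, hfa, hfane.symm⟩
          omega
        omega
      obtain ⟨k, hk⟩ := heven
      exact ⟨k + 1, by omega⟩

theorem stmt_13 (Ω : Type*) [Fintype Ω] (s₁ s₂ : Equiv.Perm Ω)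
    (h1inv : ∀ x, s₁ (s₁ x) = x) (h2inv : ∀ x, s₂ (s₂ x) = x)
    (h1f : ∀ x, s₁ x ≠ x) (h2f : ∀ x, s₂ x ≠ x)
    (G : Type*) [Group G] [MulAction G Ω]
    (hc1 : ∀ (g : G) (x : Ω), s₁ (g • x) = g • s₁ x)
    (hc2 : ∀ (g : G) (x : Ω), s₂ (g • x) = g • s₂ x)
    (Φ₀ : Ω) (O : Set Ω)
    (hO : O = (MulAction.orbit (Subgroup.closure ({s₁, s₂} : Set (Equiv.Perm Ω))) Φ₀ : Set Ω))
    (A B : Set Ω)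
    (hA : ∃ a, A = MulAction.orbit G a) (hB : ∃ b, B = MulAction.orbit G b)
    (hAB : A ≠ B)
    (hcover : O ⊆ A ∪ B) (hOA : (O ∩ A).Nonempty) (hOB : (O ∩ B).Nonempty)
    -- s₁ fixes both A∩O and B∩O setwise:
    (h1A : ∀ Φ ∈ O ∩ A, s₁ Φ ∈ A) (h1B : ∀ Φ ∈ O ∩ B, s₁ Φ ∈ B)
    -- s₂ exchanges A∩O and B∩O:
    (h2A : ∀ Φ ∈ O ∩ A, s₂ Φ ∈ B) (h2B : ∀ Φ ∈ O ∩ B, s₂ Φ ∈ A) :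
    (∀ Φ ∈ A ∩ O, s₁ Φ ∈ A ∧ s₂ Φ ∈ B) ∧ 4 ∣ Nat.card O := by
  classical
  -- A and B are disjoint
  obtain ⟨a, rfl⟩ := hA
  obtain ⟨b, rfl⟩ := hB
  have hdisj : Disjoint (MulAction.orbit G a) (MulAction.orbit G b) := by
    rw [Set.disjoint_left]
    intro x hxa hxb
    exact hAB ((MulAction.orbit_eq_iff.mpr hxa).symm.trans (MulAction.orbit_eq_iff.mpr hxb))
  set A := MulAction.orbit G a
  set B := MulAction.orbit G b
  -- O is invariant under s₁ and s₂
  have hOinv : ∀ (s : Equiv.Perm Ω), s ∈ ({s₁, s₂} : Set (Equiv.Perm Ω)) →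
      ∀ x ∈ O, s x ∈ O := by
    intro s hs x hx
    rw [hO] at hx ⊢
    obtain ⟨g, rfl⟩ := hx
    exact ⟨⟨s, Subgroup.subset_closure hs⟩ * g, rfl⟩
  have hO1 : ∀ x ∈ O, s₁ x ∈ O := hOinv s₁ (by simp)
  have hO2 : ∀ x ∈ O, s₂ x ∈ O := hOinv s₂ (by simp)
  constructor
  · intro Φ hΦ
    exact ⟨h1A Φ ⟨hΦ.2, hΦ.1⟩, h2A Φ ⟨hΦ.2, hΦ.1⟩⟩
  · -- cardinality
    have hfinOA : (O ∩ A).Finite := Set.toFinite _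
    have hfinOB : (O ∩ B).Finite := Set.toFinite _
    -- s₂ image of O∩A equals O∩B
    have himg : s₂ '' (O ∩ A) = O ∩ B := by
      apply Set.Subset.antisymm
      · rintro _ ⟨x, hx, rfl⟩
        exact ⟨hO2 x hx.1, h2A x hx⟩
      · intro y hy
        refine ⟨s₂ y, ⟨hO2 y hy.1, h2B y hy⟩, h2inv y⟩
    have hcardeq : (O ∩ A).ncard = (O ∩ B).ncard := by
      rw [← himg]
      exact (Set.ncard_image_of_injective _ s₂.injective).symm
    -- O = (O∩A) ∪ (O∩B)
    have hsplit : O = (O ∩ A) ∪ (O ∩ B) := by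
      ext x
      constructor
      · intro hx
        rcases hcover hx with h | h
        · exact Or.inl ⟨hx, h⟩
        · exact Or.inr ⟨hx, h⟩
      · rintro (h | h) <;> exact h.1
    have hdisj' : Disjoint (O ∩ A) (O ∩ B) :=
      Disjoint.mono Set.inter_subset_right Set.inter_subset_right hdisj
    have hOcard : O.ncard = (O ∩ A).ncard + (O ∩ B).ncard := by
      conv_lhs => rw [hsplit]
      exact Set.ncard_union_eq hdisj' hfinOA hfinOB
    -- even card of O ∩ A via s₁
    have heven : Even (O ∩ A).ncard := by
      rw [Set.ncard_eq_toFinset_card (O ∩ A) hfinOA]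
      apply even_card_of_fpf_invol _ s₁
      · intro x hx
        rw [Set.Finite.mem_toFinset] at hx ⊢
        exact ⟨hO1 x hx.1, h1A x hx⟩
      · intro x hx
        exact h1inv x
      · intro x hx
        exact h1f x
    obtain ⟨k, hk⟩ := heven
    rw [Nat.card_coe_set_eq, hOcard, ← hcardeq, hk]
    exact ⟨k, by ring⟩
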